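/- Let ν>1, σ²>0, r∈(0,1) and μ₁,μ₂∈ℝ, and let f_J(y₁,y₂) = ((1−r)^{ν/2+1}/(πνσ²)) · (Γ((ν+1)/2)/Γ(ν/2))² · ω(y₁,y₂)^{(ν+1)/2} · ₂F₁((ν+1)/2, (ν+1)/2; ν/2; r·ω(y₁,y₂)) denote the pairwise joint density of the NSVt model. Then for every y₂∈ℝ, ∫_ℝ y₁ · f_J(y₁,y₂) dy₁ = μ₁ · t_{ν,μ₂,σ}(y₂); that is, the conditional mean of Y_{t+j} given Y_t in the NSVt model equals its location parameter: E(Y_{t+j} | Y_t = y_t) = μ_{t+j}. -/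

import Mathlib

set_option maxHeartbeats 1000000

open MeasureTheory Real Set Filter

lemma intOn_gamma {c b : ℝ} (hc : -1 < c) (hb : 0 < b) :
    IntegrableOn (fun s : ℝ => s ^ c * Real.exp (-(b * s))) (Ioi 0) := by
  have := integrableOn_rpow_mul_exp_neg_mul_rpow (p := 1) hc one_pos hb
  simpa [Real.rpow_one, neg_mul] using this

lemma gamma_int {p b : ℝ} (hp : 0 < p) (hb : 0 < b) :
    ∫ s in Ioi (0:ℝ), s ^ (p - 1) * Real.exp (-(b * s)) = b ^ (-p) * Real.Gamma p := by
  rw [integral_rpow_mul_exp_neg_mul_Ioi hp hb]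
  rw [one_div, ← Real.rpow_neg_one, ← Real.rpow_mul hb.le]
  norm_num

lemma key_int {a q : ℝ} (ha : 0 < a) (hq : 1/2 < q) :
    Integrable (fun t : ℝ => (1 + a * t ^ 2) ^ (-q)) ∧
    ∫ t : ℝ, (1 + a * t ^ 2) ^ (-q)
      = Real.sqrt (π / a) * Real.Gamma (q - 1/2) / Real.Gamma q := by
  have hq0 : 0 < q := by linarith
  have hB : ∀ t : ℝ, 0 < 1 + a * t ^ 2 := fun t => by positivity
  have hpt : ∀ t : ℝ, Real.Gamma q * (1 + a * t ^ 2) ^ (-q)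
      = ∫ s in Ioi (0:ℝ), s ^ (q - 1) * Real.exp (-((1 + a * t ^ 2) * s)) := by
    intro t; rw [gamma_int hq0 (hB t)]; ring
  have meas : Measurable (Function.uncurry fun (t s : ℝ) =>
      ENNReal.ofReal (s ^ (q - 1) * Real.exp (-((1 + a * t ^ 2) * s)))) := by
    apply Measurable.ennreal_ofReal
    fun_prop
  have E1 : ∫⁻ t : ℝ, ENNReal.ofReal (Real.Gamma q * (1 + a * t ^ 2) ^ (-q))
      = ∫⁻ s in Ioi (0:ℝ), ∫⁻ t : ℝ,
          ENNReal.ofReal (s ^ (q - 1) * Real.exp (-((1 + a * t ^ 2) * s))) := by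
    rw [← lintegral_lintegral_swap meas.aemeasurable]
    congr 1; funext t
    rw [hpt t, ofReal_integral_eq_lintegral_ofReal]
    · exact intOn_gamma (by linarith) (hB t)
    · exact (ae_restrict_iff' measurableSet_Ioi).mpr (ae_of_all _ fun s hs => by
        have : (0:ℝ) < s := hs; positivity)
  have E2 : ∀ s ∈ Ioi (0:ℝ), (∫⁻ t : ℝ,
      ENNReal.ofReal (s ^ (q - 1) * Real.exp (-((1 + a * t ^ 2) * s))))
      = ENNReal.ofReal (s ^ (q - 1) * Real.exp (-s) * Real.sqrt (π / (a * s))) := by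
    intro s hs
    have hs0 : (0:ℝ) < s := hs
    have hrw : ∀ t : ℝ, s ^ (q - 1) * Real.exp (-((1 + a * t ^ 2) * s))
        = (s ^ (q - 1) * Real.exp (-s)) * Real.exp (-(a * s) * t ^ 2) := by
      intro t
      rw [mul_assoc, ← Real.exp_add]
      congr 2
      ring
    simp_rw [hrw]
    rw [← ofReal_integral_eq_lintegral_ofReal]
    · rw [integral_const_mul, integral_gaussian, mul_assoc]
    · exact (integrable_exp_neg_mul_sq (by positivity)).const_mul _
    · exact ae_of_all _ fun t => by positivity
  have E3 : ∫⁻ s in Ioi (0:ℝ),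
      ENNReal.ofReal (s ^ (q - 1) * Real.exp (-s) * Real.sqrt (π / (a * s)))
      = ENNReal.ofReal (Real.sqrt (π / a) * Real.Gamma (q - 1/2)) := by
    have hcg : ∀ s ∈ Ioi (0:ℝ), ENNReal.ofReal (s ^ (q - 1) * Real.exp (-s) * Real.sqrt (π / (a * s)))
        = ENNReal.ofReal (Real.sqrt (π / a) * (s ^ (q - 1/2 - 1) * Real.exp (-(1 * s)))) := by
      intro s hs
      have hs0 : (0:ℝ) < s := hs
      have h1 : π / (a * s) = (π / a) * s⁻¹ := by field_simp
      congr 1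
      rw [h1, Real.sqrt_mul (by positivity), Real.sqrt_inv]
      have h2 : (Real.sqrt s)⁻¹ = s ^ (-(1/2) : ℝ) := by
        rw [Real.rpow_neg hs0.le, Real.sqrt_eq_rpow]
      rw [h2, one_mul, show q - 1/2 - 1 = (q - 1) + (-(1/2)) by ring, Real.rpow_add hs0]
      ring
    rw [setLIntegral_congr_fun measurableSet_Ioi hcg,
      ← ofReal_integral_eq_lintegral_ofReal]
    · rw [integral_const_mul, gamma_int (by linarith) one_pos]
      rw [Real.one_rpow, one_mul]
    · exact (intOn_gamma (by linarith) one_pos).const_mul _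
    · exact (ae_restrict_iff' measurableSet_Ioi).mpr (ae_of_all _ fun s hs => by
        have : (0:ℝ) < s := hs; positivity)
  have hkey : ∫⁻ t : ℝ, ENNReal.ofReal (Real.Gamma q * (1 + a * t ^ 2) ^ (-q))
      = ENNReal.ofReal (Real.sqrt (π / a) * Real.Gamma (q - 1/2)) := by
    rw [E1, setLIntegral_congr_fun measurableSet_Ioi E2]
    exact E3
  have hnn : ∀ t : ℝ, 0 ≤ Real.Gamma q * (1 + a * t ^ 2) ^ (-q) := fun t => by
    have := Real.Gamma_pos_of_pos hq0
    have := hB t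
    positivity
  have hcont : Continuous fun t : ℝ => Real.Gamma q * (1 + a * t ^ 2) ^ (-q) := by
    apply continuous_const.mul
    apply Continuous.rpow_const (by continuity)
    exact fun t => Or.inl (hB t).ne'
  have hint : Integrable fun t : ℝ => Real.Gamma q * (1 + a * t ^ 2) ^ (-q) := by
    refine ⟨hcont.aestronglyMeasurable, ?_⟩
    rw [hasFiniteIntegral_iff_ofReal (ae_of_all _ hnn), hkey]
    exact ENNReal.ofReal_lt_top
  have heq : Real.Gamma q * ∫ t : ℝ, (1 + a * t ^ 2) ^ (-q)
      = Real.sqrt (π / a) * Real.Gamma (q - 1/2) := by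
    rw [← integral_const_mul]
    have := (ofReal_integral_eq_lintegral_ofReal hint (ae_of_all _ hnn)).trans hkey
    have hG2 := Real.Gamma_pos_of_pos (show (0:ℝ) < q - 1/2 by linarith)
    rw [ENNReal.ofReal_eq_ofReal_iff (integral_nonneg hnn) (by positivity)] at this
    exact this
  have hGq : Real.Gamma q ≠ 0 := (Real.Gamma_pos_of_pos hq0).ne'
  constructor
  · have := hint.const_mul (Real.Gamma q)⁻¹
    refine this.congr ?_
    refine ae_of_all _ fun t => ?_
    field_simp
  · rw [eq_div_iff hGq, mul_comm _ (Real.Gamma q), ← heq]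

section
variable {a q μ₁ : ℝ}

lemma cont_g (ha : 0 < a) (q : ℝ) : Continuous fun t : ℝ => (1 + a * t ^ 2) ^ (-q) := by
  apply Continuous.rpow_const (by continuity)
  exact fun t => Or.inl (by positivity)

lemma abs_bound (ha : 0 < a) (hq : (1:ℝ) < q) (t : ℝ) :
    |t| * (1 + a * t ^ 2) ^ (-q) ≤ (Real.sqrt a)⁻¹ * (1 + a * t ^ 2) ^ (-(q - 1/2)) := by
  have hB : (0:ℝ) < 1 + a * t ^ 2 := by positivity
  have habs : |t| ≤ (Real.sqrt a)⁻¹ * Real.sqrt (1 + a * t ^ 2) := by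
    rw [← Real.sqrt_sq_eq_abs, ← Real.sqrt_inv, ← Real.sqrt_mul (by positivity)]
    apply Real.sqrt_le_sqrt
    have h3 : a⁻¹ * (1 + a * t ^ 2) = a⁻¹ + t ^ 2 := by
      field_simp
    rw [h3]
    nlinarith [inv_pos.mpr ha]
  calc |t| * (1 + a * t ^ 2) ^ (-q)
      ≤ ((Real.sqrt a)⁻¹ * Real.sqrt (1 + a * t ^ 2)) * (1 + a * t ^ 2) ^ (-q) := by
        apply mul_le_mul_of_nonneg_right habs (by positivity)
    _ = (Real.sqrt a)⁻¹ * (1 + a * t ^ 2) ^ (-(q - 1/2)) := by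
        rw [mul_assoc]
        congr 1
        rw [show Real.sqrt (1 + a * t ^ 2) = (1 + a * t ^ 2) ^ (1/2 : ℝ) from
          Real.sqrt_eq_rpow _, ← Real.rpow_add hB]
        ring_nf

lemma odd_int (ha : 0 < a) (hq : (1:ℝ) < q) :
    Integrable (fun t : ℝ => t * (1 + a * t ^ 2) ^ (-q)) ∧
    ∫ t : ℝ, t * (1 + a * t ^ 2) ^ (-q) = 0 := by
  have hint : Integrable (fun t : ℝ => t * (1 + a * t ^ 2) ^ (-q)) := by
    refine Integrable.mono'
      (((key_int ha (show 1/2 < q - 1/2 by linarith)).1).const_mul ((Real.sqrt a)⁻¹)) ?_ ?_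
    · exact (continuous_id.mul (cont_g ha q)).aestronglyMeasurable
    · refine ae_of_all _ fun t => ?_
      rw [Real.norm_eq_abs, abs_mul, abs_of_pos (Real.rpow_pos_of_pos (by positivity) _)]
      exact abs_bound ha hq t
  refine ⟨hint, ?_⟩
  have h1 := integral_neg_eq_self (fun t : ℝ => t * (1 + a * t ^ 2) ^ (-q))
    (volume : Measure ℝ)
  have h2 : ∫ t : ℝ, (-t) * (1 + a * (-t) ^ 2) ^ (-q)
      = - ∫ t : ℝ, t * (1 + a * t ^ 2) ^ (-q) := by
    rw [← integral_neg]
    congr 1; funext t; ring_nf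
  rw [h2] at h1
  linarith

end

section
variable {a q : ℝ}

lemma shift_moment (ha : 0 < a) (hq : (1:ℝ) < q) (μ₁ : ℝ) :
    Integrable (fun y : ℝ => y * (1 + a * (y - μ₁) ^ 2) ^ (-q)) ∧
    (∫ y : ℝ, y * (1 + a * (y - μ₁) ^ 2) ^ (-q)
       = μ₁ * (Real.sqrt (π / a) * Real.Gamma (q - 1/2) / Real.Gamma q)) ∧
    (∫ y : ℝ, ‖y * (1 + a * (y - μ₁) ^ 2) ^ (-q)‖)
       ≤ (Real.sqrt a)⁻¹ *
           (Real.sqrt (π / a) * Real.Gamma (q - 1/2 - 1/2) / Real.Gamma (q - 1/2))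
         + |μ₁| * (Real.sqrt (π / a) * Real.Gamma (q - 1/2) / Real.Gamma q) := by
  obtain ⟨iOdd, vOdd⟩ := odd_int ha hq
  obtain ⟨iG, vG⟩ := key_int ha (show 1/2 < q by linarith)
  obtain ⟨iG', vG'⟩ := key_int ha (show 1/2 < q - 1/2 by linarith)
  have hIs : Integrable (fun y : ℝ => (y - μ₁) * (1 + a * (y - μ₁) ^ 2) ^ (-q)) :=
    iOdd.comp_sub_right μ₁
  have hIg : Integrable (fun y : ℝ => (1 + a * (y - μ₁) ^ 2) ^ (-q)) :=
    iG.comp_sub_right μ₁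
  have hIg' : Integrable (fun y : ℝ => (1 + a * (y - μ₁) ^ 2) ^ (-(q - 1/2))) :=
    iG'.comp_sub_right μ₁
  have hI : Integrable (fun y : ℝ => y * (1 + a * (y - μ₁) ^ 2) ^ (-q)) := by
    refine (hIs.add (hIg.const_mul μ₁)).congr (ae_of_all _ fun y => ?_)
    simp only [Pi.add_apply]
    ring
  have hval : ∫ y : ℝ, y * (1 + a * (y - μ₁) ^ 2) ^ (-q)
      = μ₁ * (Real.sqrt (π / a) * Real.Gamma (q - 1/2) / Real.Gamma q) := by
    have hdec : ∀ y : ℝ, y * (1 + a * (y - μ₁) ^ 2) ^ (-q)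
        = (y - μ₁) * (1 + a * (y - μ₁) ^ 2) ^ (-q)
          + μ₁ * (1 + a * (y - μ₁) ^ 2) ^ (-q) := fun y => by ring
    rw [integral_congr_ae (ae_of_all _ hdec), integral_add hIs (hIg.const_mul μ₁)]
    have hsh : ∫ y : ℝ, (y - μ₁) * (1 + a * (y - μ₁) ^ 2) ^ (-q)
        = ∫ t : ℝ, t * (1 + a * t ^ 2) ^ (-q) :=
      integral_sub_right_eq_self (fun t : ℝ => t * (1 + a * t ^ 2) ^ (-q)) μ₁
    have hsh2 : ∫ y : ℝ, (1 + a * (y - μ₁) ^ 2) ^ (-q) = ∫ t : ℝ, (1 + a * t ^ 2) ^ (-q) :=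
      integral_sub_right_eq_self (fun t : ℝ => (1 + a * t ^ 2) ^ (-q)) μ₁
    rw [hsh, vOdd, integral_const_mul, hsh2, vG, zero_add]
  refine ⟨hI, hval, ?_⟩
  have hmono : ∀ y : ℝ, ‖y * (1 + a * (y - μ₁) ^ 2) ^ (-q)‖
      ≤ (Real.sqrt a)⁻¹ * (1 + a * (y - μ₁) ^ 2) ^ (-(q - 1/2))
        + |μ₁| * (1 + a * (y - μ₁) ^ 2) ^ (-q) := by
    intro y
    have hB : (0:ℝ) < 1 + a * (y - μ₁) ^ 2 := by positivity
    have hgpos := Real.rpow_pos_of_pos hB (-q)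
    rw [Real.norm_eq_abs, abs_mul, abs_of_pos hgpos]
    have h1 : |y| ≤ |y - μ₁| + |μ₁| := by
      calc |y| = |(y - μ₁) + μ₁| := by ring_nf
        _ ≤ |y - μ₁| + |μ₁| := abs_add_le _ _
    calc |y| * (1 + a * (y - μ₁) ^ 2) ^ (-q)
        ≤ (|y - μ₁| + |μ₁|) * (1 + a * (y - μ₁) ^ 2) ^ (-q) :=
          mul_le_mul_of_nonneg_right h1 hgpos.le
      _ = |y - μ₁| * (1 + a * (y - μ₁) ^ 2) ^ (-q)
          + |μ₁| * (1 + a * (y - μ₁) ^ 2) ^ (-q) := by ring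
      _ ≤ (Real.sqrt a)⁻¹ * (1 + a * (y - μ₁) ^ 2) ^ (-(q - 1/2))
          + |μ₁| * (1 + a * (y - μ₁) ^ 2) ^ (-q) := by
          have := abs_bound ha hq (y - μ₁)
          linarith
  calc (∫ y : ℝ, ‖y * (1 + a * (y - μ₁) ^ 2) ^ (-q)‖)
      ≤ ∫ y : ℝ, ((Real.sqrt a)⁻¹ * (1 + a * (y - μ₁) ^ 2) ^ (-(q - 1/2))
          + |μ₁| * (1 + a * (y - μ₁) ^ 2) ^ (-q)) := by
        refine integral_mono hI.norm ((hIg'.const_mul _).add (hIg.const_mul _)) hmono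
    _ = (Real.sqrt a)⁻¹ *
          (Real.sqrt (π / a) * Real.Gamma (q - 1/2 - 1/2) / Real.Gamma (q - 1/2))
        + |μ₁| * (Real.sqrt (π / a) * Real.Gamma (q - 1/2) / Real.Gamma q) := by
        rw [integral_add (hIg'.const_mul _) (hIg.const_mul _), integral_const_mul,
          integral_const_mul]
        have hsh2 : ∫ y : ℝ, (1 + a * (y - μ₁) ^ 2) ^ (-q) = ∫ t : ℝ, (1 + a * t ^ 2) ^ (-q) :=
          integral_sub_right_eq_self (fun t : ℝ => (1 + a * t ^ 2) ^ (-q)) μ₁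
        have hsh3 : ∫ y : ℝ, (1 + a * (y - μ₁) ^ 2) ^ (-(q - 1/2))
            = ∫ t : ℝ, (1 + a * t ^ 2) ^ (-(q - 1/2)) :=
          integral_sub_right_eq_self (fun t : ℝ => (1 + a * t ^ 2) ^ (-(q - 1/2))) μ₁
        rw [hsh2, hsh3, vG, vG']

end

lemma tendsto_shift_ratio (c d : ℝ) :
    Filter.Tendsto (fun k : ℕ => ((k : ℝ) + c) / ((k : ℝ) + d)) atTop (nhds 1) := by
  have hd : Filter.Tendsto (fun k : ℕ => (k : ℝ) + d) atTop atTop :=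
    Filter.tendsto_atTop_add_const_right atTop d tendsto_natCast_atTop_atTop
  have h0 : Filter.Tendsto (fun k : ℕ => (c - d) / ((k : ℝ) + d)) atTop (nhds 0) :=
    Filter.Tendsto.div_atTop tendsto_const_nhds hd
  have h1 : Filter.Tendsto (fun k : ℕ => 1 + (c - d) / ((k : ℝ) + d)) atTop (nhds 1) := by
    simpa using h0.const_add 1
  refine h1.congr' ?_
  filter_upwards [hd.eventually_gt_atTop 0] with k hk
  field_simp
  ring

lemma gen_summable {c₁ c₂ c₃ c₄ c₅ : ℝ} (h₁ : 0 < c₁) (h₂ : 0 < c₂) (h₃ : 0 < c₃)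
    (h₄ : 0 < c₄) (h₅ : 0 < c₅) {x : ℝ} (hx0 : 0 < x) (hx : x < 1) :
    Summable fun k : ℕ => Real.Gamma ((k : ℝ) + c₁) * Real.Gamma ((k : ℝ) + c₂) *
      Real.Gamma ((k : ℝ) + c₃) /
      (Real.Gamma ((k : ℝ) + c₄) * Real.Gamma ((k : ℝ) + c₅) * (Nat.factorial k : ℝ)) *
      x ^ k := by
  set f : ℕ → ℝ := fun k => Real.Gamma ((k : ℝ) + c₁) * Real.Gamma ((k : ℝ) + c₂) *
      Real.Gamma ((k : ℝ) + c₃) /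
      (Real.Gamma ((k : ℝ) + c₄) * Real.Gamma ((k : ℝ) + c₅) * (Nat.factorial k : ℝ)) *
      x ^ k with hf
  have hpos : ∀ k : ℕ, 0 < f k := by
    intro k
    have g1 := Real.Gamma_pos_of_pos (show (0:ℝ) < (k : ℝ) + c₁ by positivity)
    have g2 := Real.Gamma_pos_of_pos (show (0:ℝ) < (k : ℝ) + c₂ by positivity)
    have g3 := Real.Gamma_pos_of_pos (show (0:ℝ) < (k : ℝ) + c₃ by positivity)
    have g4 := Real.Gamma_pos_of_pos (show (0:ℝ) < (k : ℝ) + c₄ by positivity)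
    have g5 := Real.Gamma_pos_of_pos (show (0:ℝ) < (k : ℝ) + c₅ by positivity)
    have g6 : (0:ℝ) < (Nat.factorial k : ℝ) := by positivity
    rw [hf]
    positivity
  have hratio : ∀ k : ℕ, f (k + 1) / f k
      = (((k : ℝ) + c₁) / ((k : ℝ) + c₄)) * ((((k : ℝ) + c₂) / ((k : ℝ) + c₅)) *
          ((((k : ℝ) + c₃) / ((k : ℝ) + 1)) * x)) := by
    intro k
    have g1 := Real.Gamma_pos_of_pos (show (0:ℝ) < (k : ℝ) + c₁ by positivity)
    have g2 := Real.Gamma_pos_of_pos (show (0:ℝ) < (k : ℝ) + c₂ by positivity)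
    have g3 := Real.Gamma_pos_of_pos (show (0:ℝ) < (k : ℝ) + c₃ by positivity)
    have g4 := Real.Gamma_pos_of_pos (show (0:ℝ) < (k : ℝ) + c₄ by positivity)
    have g5 := Real.Gamma_pos_of_pos (show (0:ℝ) < (k : ℝ) + c₅ by positivity)
    have g6 : (0:ℝ) < (Nat.factorial k : ℝ) := by positivity
    have e1 : ∀ c : ℝ, 0 < c → Real.Gamma ((↑(k + 1) : ℝ) + c)
        = ((k : ℝ) + c) * Real.Gamma ((k : ℝ) + c) := by
      intro c hc
      rw [show ((↑(k + 1) : ℝ) + c) = ((k : ℝ) + c) + 1 by push_cast; ring,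
        Real.Gamma_add_one (by positivity)]
    rw [hf]
    simp only [e1 c₁ h₁, e1 c₂ h₂, e1 c₃ h₃, e1 c₄ h₄, e1 c₅ h₅, Nat.factorial_succ]
    push_cast
    field_simp
    ring
  refine summable_of_ratio_test_tendsto_lt_one hx ?_ ?_
  · exact Filter.Eventually.of_forall fun k => (hpos k).ne'
  · have ht : Filter.Tendsto (fun k : ℕ =>
        (((k : ℝ) + c₁) / ((k : ℝ) + c₄)) * ((((k : ℝ) + c₂) / ((k : ℝ) + c₅)) *
          ((((k : ℝ) + c₃) / ((k : ℝ) + 1)) * x))) atTop (nhds x) := by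
      have := (tendsto_shift_ratio c₁ c₄).mul ((tendsto_shift_ratio c₂ c₅).mul
        (((tendsto_shift_ratio c₃ 1)).mul_const x))
      simpa using this
    refine ht.congr fun k => ?_
    rw [Real.norm_eq_abs, Real.norm_eq_abs, abs_of_pos (hpos (k+1)), abs_of_pos (hpos k),
      hratio k]

lemma binom_summable {A x : ℝ} (hA : 0 < A) (hx0 : 0 < x) (hx : x < 1) :
    Summable fun k : ℕ => Real.Gamma ((k : ℝ) + A) / (Nat.factorial k : ℝ) * x ^ k := by
  refine (gen_summable hA one_pos one_pos one_pos one_pos hx0 hx).congr fun k => ?_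
  have hG1 : Real.Gamma ((k : ℝ) + 1) ≠ 0 := by
    rw [show ((k : ℝ) + 1) = ((k : ℕ) : ℝ) + 1 by norm_num, Real.Gamma_nat_eq_factorial]
    positivity
  field_simp

lemma binom_sum {A x : ℝ} (hA : 0 < A) (hx0 : 0 < x) (hx : x < 1) :
    ∑' k : ℕ, Real.Gamma ((k : ℝ) + A) / (Nat.factorial k : ℝ) * x ^ k
      = Real.Gamma A * (1 - x) ^ (-A) := by
  set f : ℕ → ℝ := fun k => Real.Gamma ((k : ℝ) + A) / (Nat.factorial k : ℝ) * x ^ k with hf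
  have hfnn : ∀ k, 0 ≤ f k := by
    intro k
    have := Real.Gamma_pos_of_pos (show (0:ℝ) < (k : ℝ) + A by positivity)
    rw [hf]
    positivity
  have hsum : Summable f := binom_summable hA hx0 hx
  have h1x : (0:ℝ) < 1 - x := by linarith
  -- each term as an integral
  have h1 : ∀ k : ℕ, ENNReal.ofReal (f k)
      = ∫⁻ s in Ioi (0:ℝ), ENNReal.ofReal
          (s ^ ((k : ℝ) + A - 1) * Real.exp (-(1 * s)) * (x ^ k / (Nat.factorial k : ℝ))) := by
    intro k
    have hkA : (0:ℝ) < (k : ℝ) + A := by positivity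
    have hval : f k = ∫ s in Ioi (0:ℝ),
        s ^ ((k : ℝ) + A - 1) * Real.exp (-(1 * s)) * (x ^ k / (Nat.factorial k : ℝ)) := by
      rw [integral_mul_const, gamma_int hkA one_pos, Real.one_rpow]
      rw [hf]
      ring
    rw [hval, ofReal_integral_eq_lintegral_ofReal]
    · exact (intOn_gamma (by linarith) one_pos).mul_const _
    · exact (ae_restrict_iff' measurableSet_Ioi).mpr (ae_of_all _ fun s hs => by
        have : (0:ℝ) < s := hs; positivity)
  have hmeas : ∀ k : ℕ, AEMeasurable (fun s : ℝ => ENNReal.ofReal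
      (s ^ ((k : ℝ) + A - 1) * Real.exp (-(1 * s)) * (x ^ k / (Nat.factorial k : ℝ))))
      (volume.restrict (Ioi 0)) := by
    intro k
    apply Measurable.aemeasurable
    apply Measurable.ennreal_ofReal
    fun_prop
  have h3 : ∀ s ∈ Ioi (0:ℝ),
      (∑' k : ℕ, ENNReal.ofReal
        (s ^ ((k : ℝ) + A - 1) * Real.exp (-(1 * s)) * (x ^ k / (Nat.factorial k : ℝ))))
      = ENNReal.ofReal (s ^ (A - 1) * Real.exp (-((1 - x) * s))) := by
    intro s hs
    have hs0 : (0:ℝ) < s := hs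
    have hterm : ∀ k : ℕ, s ^ ((k : ℝ) + A - 1) * Real.exp (-(1 * s))
        * (x ^ k / (Nat.factorial k : ℝ))
        = (s ^ (A - 1) * Real.exp (-s)) * ((x * s) ^ k / (Nat.factorial k : ℝ)) := by
      intro k
      rw [show ((k : ℝ) + A - 1) = (A - 1) + (k : ℝ) by ring, Real.rpow_add hs0,
        Real.rpow_natCast, mul_pow, one_mul]
      ring
    simp_rw [hterm]
    have hsummable2 : Summable fun k : ℕ => (x * s) ^ k / (Nat.factorial k : ℝ) :=
      Real.summable_pow_div_factorial (x * s)
    rw [← ENNReal.ofReal_tsum_of_nonneg (fun k => by positivity)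
      (hsummable2.mul_left _)]
    congr 1
    rw [tsum_mul_left]
    have hexp : ∑' k : ℕ, (x * s) ^ k / (Nat.factorial k : ℝ) = Real.exp (x * s) := by
      rw [Real.exp_eq_exp_ℝ, NormedSpace.exp_eq_tsum_div]
    rw [hexp, mul_assoc, ← Real.exp_add]
    congr 2
    ring
  have h4 : ∫⁻ s in Ioi (0:ℝ), ENNReal.ofReal (s ^ (A - 1) * Real.exp (-((1 - x) * s)))
      = ENNReal.ofReal ((1 - x) ^ (-A) * Real.Gamma A) := by
    rw [← ofReal_integral_eq_lintegral_ofReal]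
    · rw [gamma_int hA h1x]
    · exact intOn_gamma (by linarith) h1x
    · exact (ae_restrict_iff' measurableSet_Ioi).mpr (ae_of_all _ fun s hs => by
        have : (0:ℝ) < s := hs; positivity)
  have hchain : ENNReal.ofReal (∑' k, f k) = ENNReal.ofReal ((1 - x) ^ (-A) * Real.Gamma A) := by
    rw [ENNReal.ofReal_tsum_of_nonneg hfnn hsum]
    calc ∑' k : ℕ, ENNReal.ofReal (f k)
        = ∑' k : ℕ, ∫⁻ s in Ioi (0:ℝ), ENNReal.ofReal
            (s ^ ((k : ℝ) + A - 1) * Real.exp (-(1 * s))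
              * (x ^ k / (Nat.factorial k : ℝ))) := by
          exact tsum_congr h1
      _ = ∫⁻ s in Ioi (0:ℝ), ∑' k : ℕ, ENNReal.ofReal
            (s ^ ((k : ℝ) + A - 1) * Real.exp (-(1 * s))
              * (x ^ k / (Nat.factorial k : ℝ))) := (lintegral_tsum hmeas).symm
      _ = ∫⁻ s in Ioi (0:ℝ), ENNReal.ofReal (s ^ (A - 1) * Real.exp (-((1 - x) * s))) := by
          exact setLIntegral_congr_fun measurableSet_Ioi h3
      _ = ENNReal.ofReal ((1 - x) ^ (-A) * Real.Gamma A) := h4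
  have hGA := Real.Gamma_pos_of_pos hA
  have hrp := Real.rpow_pos_of_pos h1x (-A)
  rw [ENNReal.ofReal_eq_ofReal_iff (tsum_nonneg hfnn) (by positivity)] at hchain
  rw [hchain]
  ring

theorem main_core {a A ν2 r μ₁ B₂ C1 : ℝ} (ha : 0 < a) (hA1 : 1 < A) (hν2 : 0 < ν2)
    (hAν2 : A - 1/2 = ν2) (hr0 : 0 < r) (hr1 : r < 1) (hB2 : 1 ≤ B₂) (hC1 : 0 ≤ C1) :
    (∫ y : ℝ, y * (C1 * ((1 + a * (y - μ₁) ^ 2) * B₂)⁻¹ ^ A *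
        ∑' k : ℕ, Real.Gamma ((k : ℝ) + A) * Real.Gamma ((k : ℝ) + A) * Real.Gamma ν2 /
          (Real.Gamma A * Real.Gamma A * Real.Gamma ((k : ℝ) + ν2)) *
          (r * ((1 + a * (y - μ₁) ^ 2) * B₂)⁻¹) ^ k / (Nat.factorial k : ℝ)))
      = μ₁ * (C1 * Real.sqrt (π / a) * (Real.Gamma ν2 / Real.Gamma A) * (B₂ - r) ^ (-A)) := by
  have hA0 : (0:ℝ) < A := by linarith
  have hB2pos : (0:ℝ) < B₂ := by linarith
  have hw0 : (0:ℝ) < r * B₂⁻¹ := by positivity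
  have hw1 : r * B₂⁻¹ < 1 := by
    have : r * B₂⁻¹ ≤ r * 1 := by
      apply mul_le_mul_of_nonneg_left _ hr0.le
      exact inv_le_one_of_one_le₀ hB2
    linarith
  set w : ℝ := r * B₂⁻¹ with hw_def
  have hGA := Real.Gamma_pos_of_pos hA0
  have hGν2 := Real.Gamma_pos_of_pos hν2
  have hq : ∀ k : ℕ, (1:ℝ) < A + (k : ℝ) := by
    intro k
    have : (0:ℝ) ≤ (k : ℝ) := Nat.cast_nonneg k
    linarith
  have hGkA : ∀ k : ℕ, 0 < Real.Gamma ((k : ℝ) + A) := fun k =>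
    Real.Gamma_pos_of_pos (by positivity)
  have hGkν2 : ∀ k : ℕ, 0 < Real.Gamma ((k : ℝ) + ν2) := fun k =>
    Real.Gamma_pos_of_pos (by positivity)
  set c : ℕ → ℝ := fun k => C1 * (Real.Gamma ((k : ℝ) + A) * Real.Gamma ((k : ℝ) + A) *
      Real.Gamma ν2 / (Real.Gamma A * Real.Gamma A * Real.Gamma ((k : ℝ) + ν2))) *
      (r ^ k * B₂ ^ (-(A + (k : ℝ)))) / (Nat.factorial k : ℝ) with hc_def
  have hc_nonneg : ∀ k, 0 ≤ c k := by
    intro k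
    have h1 := hGkA k; have h2 := hGkν2 k
    have h3 : (0:ℝ) < (Nat.factorial k : ℝ) := by positivity
    rw [hc_def]
    positivity
  set F : ℕ → ℝ → ℝ := fun k y =>
    y * (c k * (1 + a * (y - μ₁) ^ 2) ^ (-(A + (k : ℝ)))) with hF_def
  have hB2split : ∀ k : ℕ, B₂ ^ (-(A + (k : ℝ))) = B₂ ^ (-A) * (B₂⁻¹) ^ k := by
    intro k
    rw [show -(A + (k : ℝ)) = (-A) + (-(k : ℝ)) by ring, Real.rpow_add hB2pos,
      Real.rpow_neg hB2pos.le (k : ℝ), Real.rpow_natCast, inv_pow]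
  -- Step 1: pointwise series expansion
  have hpt : ∀ y : ℝ, y * (C1 * ((1 + a * (y - μ₁) ^ 2) * B₂)⁻¹ ^ A *
      ∑' k : ℕ, Real.Gamma ((k : ℝ) + A) * Real.Gamma ((k : ℝ) + A) * Real.Gamma ν2 /
        (Real.Gamma A * Real.Gamma A * Real.Gamma ((k : ℝ) + ν2)) *
        (r * ((1 + a * (y - μ₁) ^ 2) * B₂)⁻¹) ^ k / (Nat.factorial k : ℝ))
      = ∑' k : ℕ, F k y := by
    intro y
    have hBpos : (0:ℝ) < 1 + a * (y - μ₁) ^ 2 := by positivity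
    have hprod : (0:ℝ) < (1 + a * (y - μ₁) ^ 2) * B₂ := by positivity
    calc y * (C1 * ((1 + a * (y - μ₁) ^ 2) * B₂)⁻¹ ^ A *
          ∑' k : ℕ, Real.Gamma ((k : ℝ) + A) * Real.Gamma ((k : ℝ) + A) * Real.Gamma ν2 /
            (Real.Gamma A * Real.Gamma A * Real.Gamma ((k : ℝ) + ν2)) *
            (r * ((1 + a * (y - μ₁) ^ 2) * B₂)⁻¹) ^ k / (Nat.factorial k : ℝ))
        = (y * C1 * ((1 + a * (y - μ₁) ^ 2) * B₂)⁻¹ ^ A) *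
          ∑' k : ℕ, Real.Gamma ((k : ℝ) + A) * Real.Gamma ((k : ℝ) + A) * Real.Gamma ν2 /
            (Real.Gamma A * Real.Gamma A * Real.Gamma ((k : ℝ) + ν2)) *
            (r * ((1 + a * (y - μ₁) ^ 2) * B₂)⁻¹) ^ k / (Nat.factorial k : ℝ) := by ring
      _ = ∑' k : ℕ, (y * C1 * ((1 + a * (y - μ₁) ^ 2) * B₂)⁻¹ ^ A) *
            (Real.Gamma ((k : ℝ) + A) * Real.Gamma ((k : ℝ) + A) * Real.Gamma ν2 /
            (Real.Gamma A * Real.Gamma A * Real.Gamma ((k : ℝ) + ν2)) *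
            (r * ((1 + a * (y - μ₁) ^ 2) * B₂)⁻¹) ^ k / (Nat.factorial k : ℝ)) :=
          tsum_mul_left.symm
      _ = ∑' k : ℕ, F k y := by
          refine tsum_congr fun k => ?_
          have hpow : ((1 + a * (y - μ₁) ^ 2) * B₂)⁻¹ ^ A
            * (r * ((1 + a * (y - μ₁) ^ 2) * B₂)⁻¹) ^ k
            = (r ^ k * B₂ ^ (-(A + (k : ℝ)))) * (1 + a * (y - μ₁) ^ 2) ^ (-(A + (k : ℝ))) := by
            have step : ((1 + a * (y - μ₁) ^ 2) * B₂)⁻¹ ^ A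
                * ((1 + a * (y - μ₁) ^ 2) * B₂)⁻¹ ^ ((k : ℕ) : ℝ)
                = B₂ ^ (-(A + (k : ℝ))) * (1 + a * (y - μ₁) ^ 2) ^ (-(A + (k : ℝ))) := by
              rw [← Real.rpow_add (inv_pos.mpr hprod), Real.inv_rpow hprod.le,
                ← Real.rpow_neg hprod.le, Real.mul_rpow hBpos.le hB2pos.le]
              ring
            calc ((1 + a * (y - μ₁) ^ 2) * B₂)⁻¹ ^ A
                * (r * ((1 + a * (y - μ₁) ^ 2) * B₂)⁻¹) ^ k
                = r ^ k * (((1 + a * (y - μ₁) ^ 2) * B₂)⁻¹ ^ A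
                  * ((1 + a * (y - μ₁) ^ 2) * B₂)⁻¹ ^ ((k : ℕ) : ℝ)) := by
                  rw [mul_pow, Real.rpow_natCast]
                  ring
              _ = _ := by rw [step]; ring
          calc y * C1 * ((1 + a * (y - μ₁) ^ 2) * B₂)⁻¹ ^ A *
                (Real.Gamma ((k : ℝ) + A) * Real.Gamma ((k : ℝ) + A) * Real.Gamma ν2 /
                  (Real.Gamma A * Real.Gamma A * Real.Gamma ((k : ℝ) + ν2)) *
                  (r * ((1 + a * (y - μ₁) ^ 2) * B₂)⁻¹) ^ k / (Nat.factorial k : ℝ))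
              = y * C1 * (Real.Gamma ((k : ℝ) + A) * Real.Gamma ((k : ℝ) + A) * Real.Gamma ν2 /
                  (Real.Gamma A * Real.Gamma A * Real.Gamma ((k : ℝ) + ν2)))
                  / (Nat.factorial k : ℝ) *
                  (((1 + a * (y - μ₁) ^ 2) * B₂)⁻¹ ^ A
                    * (r * ((1 + a * (y - μ₁) ^ 2) * B₂)⁻¹) ^ k) := by ring
            _ = F k y := by
                simp only [hF_def, hc_def]
                rw [hpow]
                ring
  -- Step 2: integrability and summability of norms
  have hFint : ∀ k : ℕ, Integrable (F k) := by
    intro k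
    refine ((shift_moment ha (hq k) μ₁).1.const_mul (c k)).congr (ae_of_all _ fun y => ?_)
    simp only [hF_def]
    ring
  have hFnorm : ∀ k : ℕ, (∫ y : ℝ, ‖F k y‖)
      = c k * ∫ y : ℝ, ‖y * (1 + a * (y - μ₁) ^ 2) ^ (-(A + (k : ℝ)))‖ := by
    intro k
    rw [← integral_const_mul]
    congr 1
    funext y
    simp only [hF_def]
    rw [show y * (c k * (1 + a * (y - μ₁) ^ 2) ^ (-(A + (k : ℝ))))
        = c k * (y * (1 + a * (y - μ₁) ^ 2) ^ (-(A + (k : ℝ)))) by ring,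
      Real.norm_eq_abs, Real.norm_eq_abs, abs_mul, abs_of_nonneg (hc_nonneg k)]
  have hGk1 : ∀ k : ℕ, 0 < Real.Gamma ((k : ℝ) + 1) := fun k =>
    Real.Gamma_pos_of_pos (by positivity)
  have hGkA1 : ∀ k : ℕ, 0 < Real.Gamma ((k : ℝ) + (A - 1)) := fun k =>
    Real.Gamma_pos_of_pos (by have : (0:ℝ) ≤ (k:ℝ) := Nat.cast_nonneg k; linarith)
  have hGkA2 : ∀ k : ℕ, 0 < Real.Gamma ((k : ℝ) + (A - 1/2)) := fun k =>
    Real.Gamma_pos_of_pos (by have : (0:ℝ) ≤ (k:ℝ) := Nat.cast_nonneg k; linarith)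
  have hsum_norm : Summable fun k : ℕ => ∫ y : ℝ, ‖F k y‖ := by
    have hcongr : ∀ (K : ℝ) (G : ℕ → ℝ), (∀ k : ℕ, Summable fun k : ℕ =>
        K * (G k * w ^ k)) → True := fun _ _ _ => trivial
    have hm1 : Summable fun k : ℕ =>
        (C1 * Real.Gamma ν2 / (Real.Gamma A * Real.Gamma A) * (Real.sqrt a)⁻¹ *
          Real.sqrt (π / a)) *
        (Real.Gamma ((k : ℝ) + A) * Real.Gamma ((k : ℝ) + A) * Real.Gamma ((k : ℝ) + (A - 1)) /
          (Real.Gamma ((k : ℝ) + ν2) * Real.Gamma ((k : ℝ) + (A - 1/2)) *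
            (Nat.factorial k : ℝ)) * (r ^ k * B₂ ^ (-(A + (k : ℝ))))) := by
      have base := (gen_summable hA0 hA0 (show (0:ℝ) < A - 1 by linarith) hν2
        (show (0:ℝ) < A - 1/2 by linarith) hw0 hw1).mul_left
        ((C1 * Real.Gamma ν2 / (Real.Gamma A * Real.Gamma A) * (Real.sqrt a)⁻¹ *
          Real.sqrt (π / a)) * B₂ ^ (-A))
      refine base.congr fun k => ?_
      rw [hB2split k, hw_def, mul_pow]
      ring
    have hm2 : Summable fun k : ℕ =>
        (C1 * Real.Gamma ν2 / (Real.Gamma A * Real.Gamma A) * |μ₁| *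
          Real.sqrt (π / a)) *
        (Real.Gamma ((k : ℝ) + A) * Real.Gamma ((k : ℝ) + (A - 1/2)) *
            Real.Gamma ((k : ℝ) + 1) /
          (Real.Gamma ((k : ℝ) + ν2) * Real.Gamma ((k : ℝ) + 1) *
            (Nat.factorial k : ℝ)) * (r ^ k * B₂ ^ (-(A + (k : ℝ))))) := by
      have base := (gen_summable hA0 (show (0:ℝ) < A - 1/2 by linarith) one_pos hν2
        one_pos hw0 hw1).mul_left
        ((C1 * Real.Gamma ν2 / (Real.Gamma A * Real.Gamma A) * |μ₁| *
          Real.sqrt (π / a)) * B₂ ^ (-A))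
      refine base.congr fun k => ?_
      rw [hB2split k, hw_def, mul_pow]
      ring
    refine Summable.of_nonneg_of_le (fun k => integral_nonneg fun y => norm_nonneg _)
      (fun k => ?_) (hm1.add hm2)
    have hbd := (shift_moment ha (hq k) μ₁).2.2
    rw [hFnorm k]
    calc c k * ∫ y : ℝ, ‖y * (1 + a * (y - μ₁) ^ 2) ^ (-(A + (k : ℝ)))‖
        ≤ c k * ((Real.sqrt a)⁻¹ *
            (Real.sqrt (π / a) * Real.Gamma (A + (k : ℝ) - 1/2 - 1/2) /
              Real.Gamma (A + (k : ℝ) - 1/2))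
          + |μ₁| * (Real.sqrt (π / a) * Real.Gamma (A + (k : ℝ) - 1/2) /
              Real.Gamma (A + (k : ℝ)))) := by
          exact mul_le_mul_of_nonneg_left hbd (hc_nonneg k)
      _ = _ := by
          have e1 : Real.Gamma (A + (k : ℝ) - 1/2 - 1/2) = Real.Gamma ((k : ℝ) + (A - 1)) := by
            congr 1; ring
          have e2 : Real.Gamma (A + (k : ℝ) - 1/2) = Real.Gamma ((k : ℝ) + (A - 1/2)) := by
            congr 1; ring
          have e3 : Real.Gamma (A + (k : ℝ)) = Real.Gamma ((k : ℝ) + A) := by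
            congr 1; ring
          rw [e1, e2, e3, hc_def]
          have n1 := (hGkA k).ne'
          have n2 := (hGkν2 k).ne'
          have n3 := (hGkA2 k).ne'
          have n4 := (hGk1 k).ne'
          have n5 : (Nat.factorial k : ℝ) ≠ 0 := by positivity
          have n6 := hGA.ne'
          rw [mul_add]
          congr 1
          · field_simp
          · field_simp
  -- Step 3: swap and evaluate
  rw [integral_congr_ae (ae_of_all _ hpt),
    ← integral_tsum_of_summable_integral_norm hFint hsum_norm]
  have hFval : ∀ k : ℕ, (∫ y : ℝ, F k y)
      = (μ₁ * (C1 * Real.sqrt (π / a) * Real.Gamma ν2 /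
          (Real.Gamma A * Real.Gamma A) * B₂ ^ (-A))) *
        (Real.Gamma ((k : ℝ) + A) / (Nat.factorial k : ℝ) * w ^ k) := by
    intro k
    have h1 : (∫ y : ℝ, F k y)
        = c k * ∫ y : ℝ, y * (1 + a * (y - μ₁) ^ 2) ^ (-(A + (k : ℝ))) := by
      rw [← integral_const_mul]
      congr 1
      funext y
      simp only [hF_def]
      ring
    rw [h1, (shift_moment ha (hq k) μ₁).2.1]
    have e2 : Real.Gamma (A + (k : ℝ) - 1/2) = Real.Gamma ((k : ℝ) + ν2) := by
      congr 1
      rw [← hAν2]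
      ring
    have e3 : Real.Gamma (A + (k : ℝ)) = Real.Gamma ((k : ℝ) + A) := by
      congr 1; ring
    rw [e2, e3, hc_def]
    simp only [hB2split k]
    have hf : (0:ℝ) < (Nat.factorial k : ℝ) := by positivity
    have hwk : w ^ k = r ^ k * (B₂⁻¹) ^ k := by rw [hw_def, mul_pow]
    have n1 := (hGkA k).ne'
    have n2 := (hGkν2 k).ne'
    have n5 : (Nat.factorial k : ℝ) ≠ 0 := hf.ne'
    have n6 := hGA.ne'
    have n8 : B₂ ^ k ≠ 0 := pow_ne_zero k hB2pos.ne'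
    rw [hwk]
    simp only [inv_pow]
    field_simp
  rw [tsum_congr hFval, tsum_mul_left, binom_sum hA0 hw0 hw1]
  have h1w : (0:ℝ) < 1 - w := by linarith
  have hBw : B₂ ^ (-A) * (1 - w) ^ (-A) = (B₂ - r) ^ (-A) := by
    rw [← Real.mul_rpow hB2pos.le h1w.le]
    congr 1
    rw [hw_def]
    field_simp
  have hGAne := hGA.ne'
  rw [show μ₁ * (C1 * Real.sqrt (π / a) * Real.Gamma ν2 /
        (Real.Gamma A * Real.Gamma A) * B₂ ^ (-A)) *
        (Real.Gamma A * (1 - w) ^ (-A))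
      = μ₁ * (C1 * Real.sqrt (π / a) * Real.Gamma ν2 / Real.Gamma A) *
        (B₂ ^ (-A) * (1 - w) ^ (-A)) from by field_simp, hBw]
  ring



open MeasureTheory Real Set

/-- Modified Bessel function of the first kind (series form). -/
noncomputable def besselI (α x : ℝ) : ℝ :=
  ∑' k : ℕ, (x / 2) ^ (2 * (k : ℝ) + α) / (Real.Gamma ((k : ℝ) + α + 1) * (Nat.factorial k : ℝ))

/-- Gamma density with rate `γ` and shape `α`. -/
noncomputable def gammaPdf (γ α z : ℝ) : ℝ :=
  γ ^ α * z ^ (α - 1) * Real.exp (-γ * z) / Real.Gamma α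

/-- Kibble bivariate gamma density with parameters `φ > 0` and `r ∈ (0,1)`. -/
noncomputable def kibble (φ r z₁ z₂ : ℝ) : ℝ :=
  φ ^ (φ + 1) / ((1 - r) * Real.Gamma φ) * (z₁ * z₂ / r) ^ ((φ - 1) / 2) *
    Real.exp (-φ * (z₁ + z₂) / (1 - r)) *
    besselI (φ - 1) (2 * φ * Real.sqrt (r * z₁ * z₂) / (1 - r))

/-- Conditional normal density of the NSVt model given latent `z`: `N(μ, σ²/z)`. -/
noncomputable def normCond (σ μ y z : ℝ) : ℝ :=
  Real.sqrt z / (Real.sqrt (2 * Real.pi) * σ) * Real.exp (-z * (y - μ) ^ 2 / (2 * σ ^ 2))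

/-- Student-t density with `ν` degrees of freedom, location `μ` and scale `σ`. -/
noncomputable def studentTPdf (ν μ σ y : ℝ) : ℝ :=
  Real.Gamma ((ν + 1) / 2) / (Real.Gamma (ν / 2) * Real.sqrt (Real.pi * ν) * σ) *
    (1 + (y - μ) ^ 2 / (ν * σ ^ 2)) ^ (-(ν + 1) / 2)

/-- Gauss hypergeometric series `₂F₁(a₁,a₂;b;x)`. -/
noncomputable def hyp2F1 (a₁ a₂ b x : ℝ) : ℝ :=
  ∑' k : ℕ, Real.Gamma ((k : ℝ) + a₁) * Real.Gamma ((k : ℝ) + a₂) * Real.Gamma b /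
    (Real.Gamma a₁ * Real.Gamma a₂ * Real.Gamma ((k : ℝ) + b)) * x ^ k / (Nat.factorial k : ℝ)

/-- Confluent hypergeometric (Kummer) series `₁F₁(a;b;x)`. -/
noncomputable def hyp1F1 (a b x : ℝ) : ℝ :=
  ∑' k : ℕ, Real.Gamma ((k : ℝ) + a) * Real.Gamma b /
    (Real.Gamma a * Real.Gamma ((k : ℝ) + b)) * x ^ k / (Nat.factorial k : ℝ)

/-- Generalized Laguerre polynomial of degree `n` with parameter `α`. -/
noncomputable def laguerreL (n : ℕ) (α x : ℝ) : ℝ :=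
  ∑ i ∈ Finset.range (n + 1),
    (-1 : ℝ) ^ i * Real.Gamma ((n : ℝ) + α + 1) /
      (Real.Gamma (α + (i : ℝ) + 1) * (Nat.factorial (n - i) : ℝ) * (Nat.factorial i : ℝ)) * x ^ i

/-- Negative binomial pmf with parameters `φ > 0` and `r ∈ (0,1)`. -/
noncomputable def nbinomPmf (φ r : ℝ) (u : ℕ) : ℝ :=
  Real.Gamma (φ + u) / (Real.Gamma φ * (Nat.factorial u : ℝ)) * (1 - r) ^ φ * r ^ u

/-- The quantity `ω(y₁,y₂)` appearing in the pairwise joint density of the NSVt model. -/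
noncomputable def omegaFn (ν σ r μ₁ μ₂ y₁ y₂ : ℝ) : ℝ :=
  ((1 + (1 - r) * (y₁ - μ₁) ^ 2 / (ν * σ ^ 2)) *
    (1 + (1 - r) * (y₂ - μ₂) ^ 2 / (ν * σ ^ 2)))⁻¹

/-- Pairwise joint density of the NSVt model (with `r = ρʲ`). -/
noncomputable def pairDensity (ν σ r μ₁ μ₂ y₁ y₂ : ℝ) : ℝ :=
  (1 - r) ^ (ν / 2 + 1) / (Real.pi * ν * σ ^ 2) *
    (Real.Gamma ((ν + 1) / 2) / Real.Gamma (ν / 2)) ^ 2 *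
    omegaFn ν σ r μ₁ μ₂ y₁ y₂ ^ ((ν + 1) / 2) *
    hyp2F1 ((ν + 1) / 2) ((ν + 1) / 2) (ν / 2) (r * omegaFn ν σ r μ₁ μ₂ y₁ y₂)


/-- the conditional mean of the NSVt model equals its location parameter. -/
theorem pair_density_cond_mean (ν σ r μ₁ μ₂ : ℝ) (hν : 1 < ν) (hσ : 0 < σ)
    (hr : r ∈ Set.Ioo (0 : ℝ) 1) (y₂ : ℝ) :
    (∫ y₁ : ℝ, y₁ * pairDensity ν σ r μ₁ μ₂ y₁ y₂) = μ₁ * studentTPdf ν μ₂ σ y₂ := by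
  obtain ⟨hr0, hr1⟩ := hr
  have hν0 : (0:ℝ) < ν := by linarith
  have h1r : (0:ℝ) < 1 - r := by linarith
  have haa : (0:ℝ) < (1 - r) / (ν * σ ^ 2) := by positivity
  set aa : ℝ := (1 - r) / (ν * σ ^ 2) with haa_def
  have hB2 : (1:ℝ) ≤ 1 + aa * (y₂ - μ₂) ^ 2 := le_add_of_nonneg_right (by positivity)
  have hGA := Real.Gamma_pos_of_pos (show (0:ℝ) < (ν + 1)/2 by linarith)
  have hGν2 := Real.Gamma_pos_of_pos (show (0:ℝ) < ν/2 by linarith)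
  have hC1 : (0:ℝ) ≤ (1 - r) ^ (ν/2 + 1) / (π * ν * σ ^ 2) *
      (Real.Gamma ((ν + 1)/2) / Real.Gamma (ν/2)) ^ 2 := by positivity
  have hinteg : ∀ y₁ : ℝ, y₁ * pairDensity ν σ r μ₁ μ₂ y₁ y₂
      = y₁ * ((1 - r) ^ (ν/2 + 1) / (π * ν * σ ^ 2) *
          (Real.Gamma ((ν + 1)/2) / Real.Gamma (ν/2)) ^ 2 *
          ((1 + aa * (y₁ - μ₁) ^ 2) * (1 + aa * (y₂ - μ₂) ^ 2))⁻¹ ^ ((ν + 1)/2) *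
          ∑' k : ℕ, Real.Gamma ((k : ℝ) + (ν + 1)/2) * Real.Gamma ((k : ℝ) + (ν + 1)/2) *
            Real.Gamma (ν/2) /
            (Real.Gamma ((ν + 1)/2) * Real.Gamma ((ν + 1)/2) * Real.Gamma ((k : ℝ) + ν/2)) *
            (r * ((1 + aa * (y₁ - μ₁) ^ 2) * (1 + aa * (y₂ - μ₂) ^ 2))⁻¹) ^ k /
            (Nat.factorial k : ℝ)) := by
    intro y₁
    have hω : omegaFn ν σ r μ₁ μ₂ y₁ y₂
        = ((1 + aa * (y₁ - μ₁) ^ 2) * (1 + aa * (y₂ - μ₂) ^ 2))⁻¹ := by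
      rw [omegaFn, haa_def]
      congr 1
      ring
    simp only [pairDensity, hyp2F1]
    rw [hω]
  rw [integral_congr_ae (ae_of_all _ hinteg),
    main_core haa (show (1:ℝ) < (ν + 1)/2 by linarith) (show (0:ℝ) < ν/2 by linarith)
      (show ((ν + 1)/2 - 1/2 : ℝ) = ν/2 by ring) hr0 hr1 hB2 hC1]
  -- final algebra
  have hD : (0:ℝ) < 1 + (y₂ - μ₂) ^ 2 / (ν * σ ^ 2) := by positivity
  have h1 : (1 + aa * (y₂ - μ₂) ^ 2) - r = (1 - r) * (1 + (y₂ - μ₂) ^ 2 / (ν * σ ^ 2)) := by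
    rw [haa_def]
    field_simp
    ring
  have h2 : ((1 + aa * (y₂ - μ₂) ^ 2) - r) ^ (-((ν + 1)/2))
      = (1 - r) ^ (-((ν + 1)/2)) * (1 + (y₂ - μ₂) ^ 2 / (ν * σ ^ 2)) ^ (-((ν + 1)/2)) := by
    rw [h1, Real.mul_rpow h1r.le hD.le]
  have h3 : Real.sqrt (π / aa) = Real.sqrt (π * ν) * σ / Real.sqrt (1 - r) := by
    have e : π / aa = π * ν * σ ^ 2 * (1 - r)⁻¹ := by
      rw [haa_def]
      field_simp
    rw [e, Real.sqrt_mul (by positivity), Real.sqrt_mul (by positivity), Real.sqrt_sq hσ.le,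
      Real.sqrt_inv]
    ring
  have h4 : (1 - r) ^ (ν/2 + 1) * (1 - r) ^ (-((ν + 1)/2)) = Real.sqrt (1 - r) := by
    rw [← Real.rpow_add h1r, Real.sqrt_eq_rpow]
    congr 1
    ring
  have hP0 : Real.sqrt (π * ν) ≠ 0 := (Real.sqrt_pos.mpr (by positivity)).ne'
  have hQ0 : Real.sqrt (1 - r) ≠ 0 := (Real.sqrt_pos.mpr h1r).ne'
  have h5 : π * ν = Real.sqrt (π * ν) * Real.sqrt (π * ν) :=
    (Real.mul_self_sqrt (by positivity)).symm
  rw [studentTPdf, h2, h3, show ((-(ν + 1))/2 : ℝ) = -((ν + 1)/2) by ring]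
  rw [show (1 - r) ^ (ν/2 + 1) / (π * ν * σ ^ 2) *
        (Real.Gamma ((ν + 1)/2) / Real.Gamma (ν/2)) ^ 2 *
        (Real.sqrt (π * ν) * σ / Real.sqrt (1 - r)) *
        (Real.Gamma (ν/2) / Real.Gamma ((ν + 1)/2)) *
        ((1 - r) ^ (-((ν + 1)/2)) * (1 + (y₂ - μ₂) ^ 2 / (ν * σ ^ 2)) ^ (-((ν + 1)/2)))
      = ((1 - r) ^ (ν/2 + 1) * (1 - r) ^ (-((ν + 1)/2))) *
        ((Real.Gamma ((ν + 1)/2) / Real.Gamma (ν/2)) ^ 2 *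
          (Real.sqrt (π * ν) * σ / Real.sqrt (1 - r)) *
          (Real.Gamma (ν/2) / Real.Gamma ((ν + 1)/2)) *
          (1 + (y₂ - μ₂) ^ 2 / (ν * σ ^ 2)) ^ (-((ν + 1)/2)) / (π * ν * σ ^ 2)) from by
    ring]
  rw [h4, h5]
  field_simp
  ring
  rw [Real.sq_sqrt (sq_nonneg _)]
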